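/- Let φ be a continuous flow on a topological space M and suppose there exist a real number c ≠ 0 and a continuous surjection p : M → Circle such that p(φ_t(x)) = e^{ict}·p(x) for all t ∈ ℝ and x ∈ M. Then φ is not topologically mixing. -/

import Mathlib

/-- A continuous flow on a topological space: a continuous map `φ : ℝ × M → M` with
`φ 0 = id` and `φ (s+t) = φ s ∘ φ t`. -/
structure IsContinuousFlow {M : Type*} [TopologicalSpace M] (φ : ℝ → M → M) : Prop where
  continuous : Continuous (fun p : ℝ × M => φ p.1 p.2)
  init : ∀ x, φ 0 x = x
  add : ∀ s t x, φ (s + t) x = φ s (φ t x)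

/-- A flow is topologically mixing if for all nonempty open `U, V` there is `T > 0` such that
`φ t U` meets `V` for all `t ≥ T`. -/
def IsTopologicallyMixingFlow {M : Type*} [TopologicalSpace M] (φ : ℝ → M → M) : Prop :=
  ∀ U V : Set M, IsOpen U → IsOpen V → U.Nonempty → V.Nonempty →
    ∃ T > (0 : ℝ), ∀ t ≥ T, ((φ t '' U) ∩ V).Nonempty

/-- A continuous flow which fibers equivariantly over a nontrivial rotation flow of the circle
(i.e. admits a closed global section with constant return time) is not topologically mixing. -/
theorem not_mixing_of_circle_factor {M : Type*} [TopologicalSpace M]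
    (φ : ℝ → M → M) (hφ : IsContinuousFlow φ)
    (c : ℝ) (hc : c ≠ 0) (p : M → Circle) (hp_cont : Continuous p)
    (hp_surj : Function.Surjective p)
    (hequiv : ∀ (t : ℝ) (x : M), p (φ t x) = Circle.exp (c * t) * p x) :
    ¬ IsTopologicallyMixingFlow φ := by
  intro hmix
  set U : Set M := p ⁻¹' {z | 0 < (z : ℂ).re} with hU
  set V : Set M := p ⁻¹' {z | (z : ℂ).re < 0} with hV
  have hre : Continuous fun x : M => ((p x : ℂ)).re :=
    Complex.continuous_re.comp (continuous_induced_dom.comp hp_cont)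
  have hUopen : IsOpen U := isOpen_lt continuous_const hre
  have hVopen : IsOpen V := isOpen_lt hre continuous_const
  obtain ⟨x1, hx1⟩ := hp_surj 1
  obtain ⟨x2, hx2⟩ := hp_surj (Circle.exp Real.pi)
  have hUne : U.Nonempty := ⟨x1, by simp [hU, hx1]⟩
  have hVne : V.Nonempty := by
    refine ⟨x2, ?_⟩
    simp only [hV, Set.mem_preimage, Set.mem_setOf_eq, hx2, Circle.coe_exp]
    rw [Complex.exp_mul_I]
    simp [Real.cos_pi]
  obtain ⟨T, hT0, hT⟩ := hmix U V hUopen hVopen hUne hVne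
  have hcpos : 0 < |c| := abs_pos.mpr hc
  have h2pi : (0:ℝ) < 2 * Real.pi := by positivity
  obtain ⟨n, hn⟩ := exists_nat_ge (T * |c| / (2 * Real.pi))
  set t : ℝ := 2 * Real.pi * n / |c| with ht
  have htT : t ≥ T := by
    rw [ht, ge_iff_le, le_div_iff₀ hcpos]
    calc T * |c| = (T * |c| / (2 * Real.pi)) * (2 * Real.pi) := by field_simp
    _ ≤ n * (2 * Real.pi) := by nlinarith [Real.pi_pos]
    _ = 2 * Real.pi * n := by ring
  obtain ⟨y, ⟨x, hxU, hxy⟩, hyV⟩ := hT t htT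
  have hexp : Circle.exp (c * t) = 1 := by
    rcases hc.lt_or_gt with hlt | hlt
    · have : c * t = ((-n : ℤ) : ℝ) * (2 * Real.pi) := by
        rw [ht, abs_of_neg hlt]; push_cast
        rw [div_neg, mul_neg, neg_mul, neg_inj, mul_div_assoc']
        rw [mul_comm c, mul_div_assoc, div_self hc, mul_one]; ring
      rw [this, Circle.exp_int_mul_two_pi]
    · have : c * t = ((n : ℤ) : ℝ) * (2 * Real.pi) := by
        rw [ht, abs_of_pos hlt]; push_cast; field_simp
      rw [this, Circle.exp_int_mul_two_pi]
  have hpy : p y = p x := by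
    rw [← hxy, hequiv, hexp, one_mul]
  have h1 : 0 < ((p x : ℂ)).re := hxU
  have h2 : ((p y : ℂ)).re < 0 := hyV
  rw [hpy] at h2
  linarith
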